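/- The Cheng labeling is consistent with Kauffman's affine labeling: labeling each arc by the sum of signs of crossings first encountered as overcrossings when traveling around the diagram starting from that arc yields the same crossing weights W_±(c) as the affine labeling starting from an arbitrary arc labeled 0. -/

import Mathlib

open scoped Classical
open LaurentPolynomial

noncomputable section

/-- A Gauss diagram for an oriented virtual knot with `n` classical crossings: a circle
with `2 * n` marked points (positions in `ZMod (2*n)`, traversed in cyclic order), and for
each crossing `c` a signed oriented chord, recorded by the position `over c` of its
over-passage (head), the position `under c` of its under-passage (tail), and its sign. -/
structure GaussDiagram (n : ℕ) where
  over' : Fin n → ZMod (2 * n)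
  under : Fin n → ZMod (2 * n)
  sign : Fin n → ℤ
  endpoints_inj : Function.Injective
    (fun p : Fin n × Bool => if p.2 then over' p.1 else under p.1)
  sign_pm : ∀ c, sign c = 1 ∨ sign c = -1

namespace GaussDiagram

/-- `x` lies strictly inside the arc running forward (in the orientation of the circle)
from `a` to `b`. -/
def Between {m : ℕ} (a b x : ZMod m) : Prop :=
  (x - a).val < (b - a).val ∧ x ≠ a

variable {n : ℕ}

/-- After orientedly smoothing the crossing `c`, the first component of the resulting
2-component link `L_c` (the component carrying the dot placed on the incoming understrand
of `c`) is the arc running forward from the over-passage of `c` to its under-passage. -/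
def onComp1 (G : GaussDiagram n) (c : Fin n) (x : ZMod (2 * n)) : Prop :=
  Between (G.over' c) (G.under c) x

/-- The chords `c` and `d` intersect (interleave): exactly one endpoint of `d` lies in the
arc cut out by `c`; equivalently `d` becomes a linking crossing of the smoothed link `L_c`. -/
def Crosses (G : GaussDiagram n) (c d : Fin n) : Prop :=
  Xor' (G.onComp1 c (G.over' d)) (G.onComp1 c (G.under d))

/-- `d ∈ P_c`: `d` intersects `c` positively (traveling along the first component of `L_c`
one passes *over* `d`). -/
def PosAt (G : GaussDiagram n) (c d : Fin n) : Prop :=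
  G.Crosses c d ∧ G.onComp1 c (G.over' d)

/-- `d ∈ N_c`: `d` intersects `c` negatively (traveling along the first component of `L_c`
one passes *under* `d`). -/
def NegAt (G : GaussDiagram n) (c d : Fin n) : Prop :=
  G.Crosses c d ∧ G.onComp1 c (G.under d)

/-- The wriggle number `W(L_c) = lk_O(L_c) - lk_U(L_c)` of the ordered 2-component link
obtained by the oriented smoothing at `c`. -/
def wriggle (G : GaussDiagram n) (c : Fin n) : ℤ :=
  (∑ d ∈ Finset.univ.filter (fun d => G.PosAt c d), G.sign d)
    - ∑ d ∈ Finset.univ.filter (fun d => G.NegAt c d), G.sign d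

/-- The writhe: the sum of the signs of all crossings. -/
def writhe (G : GaussDiagram n) : ℤ := ∑ c, G.sign c

/-- The Wriggle Polynomial `W_K(t) = Σ_c sign(c) · t^{W(L_c)} - writhe(K)`, as a Laurent
polynomial over `ℤ`. -/
def wrigglePoly (G : GaussDiagram n) : LaurentPolynomial ℤ :=
  (∑ c, C (G.sign c) * T (G.wriggle c)) - C G.writhe

end GaussDiagram

namespace GaussDiagram

variable {n : ℕ}

/-- The change of affine label when passing (in the direction of orientation) the marked
point `p` of the circle: passing the over-passage (head) of a chord `d` changes the label
by `-sign d`, passing its under-passage (tail) changes it by `+sign d` (so `o+` gives `-1`,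
`u+` gives `+1`, `o-` gives `+1`, `u-` gives `-1`). -/
def delta (G : GaussDiagram n) (p : ZMod (2 * n)) : ℤ :=
  (∑ d ∈ Finset.univ.filter (fun d => G.over' d = p), -G.sign d)
    + ∑ d ∈ Finset.univ.filter (fun d => G.under d = p), G.sign d

/-- Kauffman's affine labeling of the arcs of the diagram: the arc of the circle running
from the marked point `a` to `a + 1` receives the label obtained by starting with label `0`
on the arc `(base, base + 1)` and applying the label changes `delta` at each marked point
passed while traveling forward from the base arc to the arc `(a, a+1)`. -/
def labelFrom (G : GaussDiagram n) (base a : ZMod (2 * n)) : ℤ :=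
  ∑ j ∈ Finset.range ((a - base).val), G.delta (base + (j : ZMod (2 * n)) + 1)

/-- The weight `W_±(c)` of a crossing computed from an arc labeling `ℓ` (where `ℓ p` is the
label of the arc `(p, p+1)`): for a positive crossing with incoming over-arc label `a` and
incoming under-arc label `b` it is `a - (b + 1)`; for a negative crossing it is
`a - (b - 1)` (equivalently, the paper's `b' - (a' - 1)` in its labeling of the arcs at a
negative crossing). -/
def weightWith (G : GaussDiagram n) (ℓ : ZMod (2 * n) → ℤ) (c : Fin n) : ℤ :=
  if G.sign c = 1 then ℓ (G.over' c - 1) - (ℓ (G.under c - 1) + 1)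
  else ℓ (G.over' c - 1) - (ℓ (G.under c - 1) - 1)

/-- The affine index weight `W_±(c)` computed from the affine labeling based at `base`. -/
def affineWeight (G : GaussDiagram n) (base : ZMod (2 * n)) (c : Fin n) : ℤ :=
  G.weightWith (G.labelFrom base) c

/-- The Affine Index Polynomial `Σ_c sign(c) · t^{W_±(c)} - writhe(K)` computed from the
affine labeling based at `base`. -/
def affinePoly (G : GaussDiagram n) (base : ZMod (2 * n)) : LaurentPolynomial ℤ :=
  (∑ c, C (G.sign c) * T (G.affineWeight base c)) - C G.writhe

end GaussDiagram

namespace GaussDiagram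

/-- Cheng's labeling: the arc `(a, a+1)` is labeled by the sum of the signs of the
crossings whose over-passage (head of the chord) is encountered strictly before their
under-passage (tail) when traveling once around the circle starting on that arc. -/
def chengLabel {n : ℕ} (G : GaussDiagram n) (a : ZMod (2 * n)) : ℤ :=
  ∑ d ∈ Finset.univ.filter
      (fun d => (G.over' d - (a + 1)).val < (G.under d - (a + 1)).val),
    G.sign d

end GaussDiagram


namespace GaussDiagram

variable {n : ℕ}

lemma over_ne_under (G : GaussDiagram n) (d : Fin n) : G.over' d ≠ G.under d := by
  intro h
  have := G.endpoints_inj (a₁ := (d, true)) (a₂ := (d, false)) (by simpa using h)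
  simp at this

lemma val_sub_one {m : ℕ} [NeZero m] (y : ZMod m) (hy : y ≠ 0) :
    (y - 1).val = y.val - 1 := by
  have h0 : y.val ≠ 0 := by
    simpa [ZMod.val_eq_zero] using hy
  have h1 : 1 ≤ y.val := Nat.one_le_iff_ne_zero.mpr h0
  have hlt : y.val - 1 < m := lt_of_le_of_lt (Nat.sub_le _ _) (ZMod.val_lt y)
  have : y - 1 = ((y.val - 1 : ℕ) : ZMod m) := by
    push_cast [Nat.cast_sub h1]
    simp [ZMod.natCast_val, ZMod.cast_id]
  rw [this, ZMod.val_cast_of_lt hlt]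

lemma cheng_step (G : GaussDiagram n) (hn : 0 < n) (b : ZMod (2 * n)) :
    G.chengLabel (b + 1) = G.chengLabel b + G.delta (b + 1) := by
  haveI : NeZero (2 * n) := ⟨by omega⟩
  unfold chengLabel delta
  rw [Finset.sum_filter, Finset.sum_filter, Finset.sum_filter, Finset.sum_filter,
    ← Finset.sum_add_distrib, ← Finset.sum_add_distrib]
  apply Finset.sum_congr rfl
  intro d _
  have hne := G.over_ne_under d
  have hvo : (G.over' d - (b + 1)).val < 2 * n := ZMod.val_lt _
  have hvu : (G.under d - (b + 1)).val < 2 * n := ZMod.val_lt _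
  have hneg1 : ((-1 : ZMod (2 * n))).val = 2 * n - 1 := by
    have e : ((2 * n - 1 : ℕ) : ZMod (2 * n)) = -1 := by
      rw [Nat.cast_sub (by omega : 1 ≤ 2 * n)]; simp
    rw [← e, ZMod.val_cast_of_lt (by omega)]
  by_cases ho : G.over' d = b + 1
  · have hu : G.under d ≠ b + 1 := fun h => hne (ho.trans h.symm)
    have h1 : G.over' d - (b + 1 + 1) = -1 := by rw [ho]; ring
    have h2 : (G.under d - (b + 1 + 1)).val = (G.under d - (b + 1)).val - 1 := by
      have : G.under d - (b + 1 + 1) = (G.under d - (b + 1)) - 1 := by ring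
      rw [this]; exact val_sub_one _ (sub_ne_zero.mpr hu)
    have h3 : (G.over' d - (b + 1)).val = 0 := by
      simp [ho]
    have h4 : (G.under d - (b + 1)).val ≠ 0 := by
      simpa [ZMod.val_eq_zero, sub_eq_zero] using hu
    rw [h1, hneg1, h2]
    have hnew : ¬ (2 * n - 1 < (G.under d - (b + 1)).val - 1) := by omega
    have hold : (G.over' d - (b + 1)).val < (G.under d - (b + 1)).val := by omega
    simp [hnew, hold, ho, hu, Nat.pos_of_ne_zero h4]
    try omega
  · by_cases hu : G.under d = b + 1
    · have h1 : G.under d - (b + 1 + 1) = -1 := by rw [hu]; ring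
      have h2 : (G.over' d - (b + 1 + 1)).val = (G.over' d - (b + 1)).val - 1 := by
        have : G.over' d - (b + 1 + 1) = (G.over' d - (b + 1)) - 1 := by ring
        rw [this]; exact val_sub_one _ (sub_ne_zero.mpr ho)
      have h3 : (G.under d - (b + 1)).val = 0 := by simp [hu]
      have h4 : (G.over' d - (b + 1)).val ≠ 0 := by
        simpa [ZMod.val_eq_zero, sub_eq_zero] using ho
      rw [h1, hneg1, h2, h3]
      have hlt : (G.over' d - (b + 1)).val - 1 < 2 * n - 1 := by omega
      have hnlt : ¬ ((G.over' d - (b + 1)).val < 0) := by omega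
      simp [hlt, hnlt, ho, hu]
    · have h1 : (G.over' d - (b + 1 + 1)).val = (G.over' d - (b + 1)).val - 1 := by
        have : G.over' d - (b + 1 + 1) = (G.over' d - (b + 1)) - 1 := by ring
        rw [this]; exact val_sub_one _ (sub_ne_zero.mpr ho)
      have h2 : (G.under d - (b + 1 + 1)).val = (G.under d - (b + 1)).val - 1 := by
        have : G.under d - (b + 1 + 1) = (G.under d - (b + 1)) - 1 := by ring
        rw [this]; exact val_sub_one _ (sub_ne_zero.mpr hu)
      have h3 : (G.over' d - (b + 1)).val ≠ 0 := by
        simpa [ZMod.val_eq_zero, sub_eq_zero] using ho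
      have h4 : (G.under d - (b + 1)).val ≠ 0 := by
        simpa [ZMod.val_eq_zero, sub_eq_zero] using hu
      rw [h1, h2]
      have : ((G.over' d - (b + 1)).val - 1 < (G.under d - (b + 1)).val - 1) ↔
          ((G.over' d - (b + 1)).val < (G.under d - (b + 1)).val) := by omega
      rw [if_congr this rfl rfl]
      simp [ho, hu]

lemma cheng_add (G : GaussDiagram n) (hn : 0 < n) (base : ZMod (2 * n)) (k : ℕ) :
    G.chengLabel (base + (k : ZMod (2 * n))) =
      G.chengLabel base + ∑ j ∈ Finset.range k, G.delta (base + (j : ZMod (2 * n)) + 1) := by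
  induction k with
  | zero => simp
  | succ k ih =>
    have : base + ((k + 1 : ℕ) : ZMod (2 * n)) = (base + (k : ZMod (2 * n))) + 1 := by
      push_cast; ring
    rw [this, G.cheng_step hn, ih, Finset.sum_range_succ, add_assoc]

lemma cheng_eq_label_add (G : GaussDiagram n) (hn : 0 < n) (base a : ZMod (2 * n)) :
    G.chengLabel a = G.chengLabel base + G.labelFrom base a := by
  haveI : NeZero (2 * n) := ⟨by omega⟩
  have h := G.cheng_add hn base ((a - base).val)
  rw [ZMod.natCast_zmod_val] at h
  simpa [labelFrom] using h

end GaussDiagram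

open GaussDiagram

/-- The Cheng labeling is consistent with Kauffman's affine labeling:
labeling each arc by the sum of signs of crossings first encountered as overcrossings when
traveling around the diagram starting from that arc yields the same crossing weights
`W_±(c)` as the affine labeling starting from an arbitrary arc labeled `0`. -/
theorem chengWeight_eq_affineWeight {n : ℕ} (G : GaussDiagram n) (base : ZMod (2 * n))
    (c : Fin n) :
    G.weightWith G.chengLabel c = G.affineWeight base c := by
  rcases Nat.eq_zero_or_pos n with h | h
  · subst h; exact c.elim0
  · unfold affineWeight weightWith
    rw [G.cheng_eq_label_add h base (G.over' c - 1), G.cheng_eq_label_add h base (G.under c - 1)]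
    split <;> ring
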